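/- The ring of real quaternions H is a CU ring (every quaternion is a sum of a central element and a unit) but H is not a CN ring (the quaternion i is not a sum of a central quaternion and a nilpotent quaternion). -/

import Mathlib

open Quaternion

/-- An element of a ring has a *CN-decomposition* if it is a sum of a central
element and a nilpotent element. -/
def HasCNDecomp {R : Type*} [Ring R] (a : R) : Prop :=
  ∃ c n : R, c ∈ Set.center R ∧ IsNilpotent n ∧ a = c + n

/-- A ring is a *CN ring* if every element has a CN-decomposition. -/
def IsCNRing (R : Type*) [Ring R] : Prop := ∀ a : R, HasCNDecomp a

/-- An element of a ring has a *CU-decomposition* if it is a sum of a central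
element and a unit. -/
def HasCUDecomp {R : Type*} [Ring R] (a : R) : Prop :=
  ∃ c u : R, c ∈ Set.center R ∧ IsUnit u ∧ a = c + u

/-- A ring is a *CU ring* if every element has a CU-decomposition. -/
def IsCURing (R : Type*) [Ring R] : Prop := ∀ a : R, HasCUDecomp a

/-- The real quaternions form a CU ring, but not a CN ring: the quaternion `i`
has no CN-decomposition. -/
theorem quaternions_CU_not_CN :
    IsCURing ℍ[ℝ] ∧ ¬ HasCNDecomp (⟨0, 1, 0, 0⟩ : ℍ[ℝ]) ∧ ¬ IsCNRing ℍ[ℝ] := by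
  have hCN : ¬ HasCNDecomp (⟨0, 1, 0, 0⟩ : ℍ[ℝ]) := by
    rintro ⟨c, n, hc, hn, h⟩
    haveI : NoZeroDivisors (QuaternionAlgebra ℝ (-1) 0 (-1)) :=
      (inferInstance : NoZeroDivisors (Quaternion ℝ))
    obtain ⟨k, hk⟩ := hn
    have hn0 : n = 0 := by
      rcases Nat.eq_zero_or_pos k with h0 | h0
      · subst h0; simp at hk
      · by_contra hne
        exact (pow_ne_zero k hne) hk
    subst hn0
    rw [add_zero] at h
    subst h
    have := hc.comm (⟨0, 0, 1, 0⟩ : ℍ[ℝ])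
    have h1 : ((⟨0, 1, 0, 0⟩ : ℍ[ℝ]) * ⟨0, 0, 1, 0⟩).imK = 1 := by
      simp [Quaternion.imK_mul]
    have h2 : ((⟨0, 0, 1, 0⟩ : ℍ[ℝ]) * ⟨0, 1, 0, 0⟩).imK = -1 := by
      simp [Quaternion.imK_mul]
    rw [this] at h1
    rw [h1] at h2
    norm_num at h2
  refine ⟨?_, hCN, fun h => hCN (h _)⟩
  intro a
  by_cases ha : a = 0
  · exact ⟨-1, 1, Set.neg_mem_center Set.one_mem_center, isUnit_one, by simp [ha]⟩
  · exact ⟨0, a, Set.zero_mem_center, (isUnit_iff_ne_zero).mpr ha, by simp⟩
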